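/- Under the hypotheses of the adjoint construction — λ solving Aᵀλ' - Bᵀλ = ∂U/∂φ on [0,t_m] with λ(t_m)=0, and w = dφ/dp solving A w' + B w = -(dA/dp)φ' - (dB/dp)φ with w(0)=0 — the total sensitivity satisfies ∫₀^{t_m} (∂U/∂φ)(t)ᵀ w(t) dt = ∫₀^{t_m} λ(t)ᵀ ((dA/dp) φ'(t) + (dB/dp) φ(t)) dt. -/

import Mathlib

open Matrix

theorem stmt_14 {n : ℕ} (A B Ap Bp : Matrix (Fin n) (Fin n) ℝ)
    (tm : ℝ) (htm : 0 ≤ tm)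
    (lam lam' w w' φ φ' Uφ : ℝ → Fin n → ℝ)
    (hlam : ∀ t ∈ Set.Icc (0:ℝ) tm, HasDerivAt lam (lam' t) t)
    (hw : ∀ t ∈ Set.Icc (0:ℝ) tm, HasDerivAt w (w' t) t)
    (hφ : ∀ t ∈ Set.Icc (0:ℝ) tm, HasDerivAt φ (φ' t) t)
    (hlamc : Continuous lam') (hwc : Continuous w') (hφc : Continuous φ')
    (hUc : Continuous Uφ)
    (hadj : ∀ t ∈ Set.Icc (0:ℝ) tm, Aᵀ *ᵥ lam' t - Bᵀ *ᵥ lam t = Uφ t)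
    (hlamT : lam tm = 0)
    (hsens : ∀ t ∈ Set.Icc (0:ℝ) tm,
      A *ᵥ w' t + B *ᵥ w t = -(Ap *ᵥ φ' t) - (Bp *ᵥ φ t))
    (hw0 : w 0 = 0) :
    ∫ t in (0:ℝ)..tm, Uφ t ⬝ᵥ w t
      = ∫ t in (0:ℝ)..tm, lam t ⬝ᵥ (Ap *ᵥ φ' t + Bp *ᵥ φ t) := by
  have hIcc : Set.uIcc (0:ℝ) tm = Set.Icc 0 tm := Set.uIcc_of_le htm
  -- continuity on Icc of lam, w, φ
  have hlamC : ContinuousOn lam (Set.Icc 0 tm) :=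
    fun t ht => ((hlam t ht).continuousAt).continuousWithinAt
  have hwC : ContinuousOn w (Set.Icc 0 tm) :=
    fun t ht => ((hw t ht).continuousAt).continuousWithinAt
  have hφC : ContinuousOn φ (Set.Icc 0 tm) :=
    fun t ht => ((hφ t ht).continuousAt).continuousWithinAt
  set gd : ℝ → ℝ := fun t => lam' t ⬝ᵥ (A *ᵥ w t) + lam t ⬝ᵥ (A *ᵥ w' t) with hgd
  have hg : ∀ t ∈ Set.uIcc (0:ℝ) tm,
      HasDerivAt (fun t => lam t ⬝ᵥ (A *ᵥ w t)) (gd t) t := by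
    intro t ht
    rw [hIcc] at ht
    have h1 := hlam t ht
    have h2 := hw t ht
    have key : HasDerivAt (fun t => ∑ i, lam t i * ∑ j, A i j * w t j)
        (∑ i, (lam' t i * ∑ j, A i j * w t j + lam t i * ∑ j, A i j * w' t j)) t := by
      apply HasDerivAt.fun_sum
      intro i _
      exact (hasDerivAt_pi.1 h1 i).mul
        (HasDerivAt.fun_sum fun j _ => (hasDerivAt_pi.1 h2 j).const_mul (A i j))
    have e1 : (fun t => lam t ⬝ᵥ (A *ᵥ w t)) = fun t => ∑ i, lam t i * ∑ j, A i j * w t j := by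
      funext t; simp [dotProduct, Matrix.mulVec]
    have e2 : gd t = ∑ i, (lam' t i * ∑ j, A i j * w t j + lam t i * ∑ j, A i j * w' t j) := by
      simp [hgd, dotProduct, Matrix.mulVec, Finset.sum_add_distrib]
    rw [e1, e2]; exact key
  -- continuity helpers
  have hdotC : ∀ (u v : ℝ → Fin n → ℝ), ContinuousOn u (Set.Icc 0 tm) →
      ContinuousOn v (Set.Icc 0 tm) →
      ContinuousOn (fun t => u t ⬝ᵥ v t) (Set.Icc 0 tm) := by
    intro u v hu hv
    simp only [dotProduct]
    apply continuousOn_finset_sum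
    intro i _
    exact ((continuous_apply i).comp_continuousOn hu).mul
      ((continuous_apply i).comp_continuousOn hv)
  have hmulC : ∀ (M : Matrix (Fin n) (Fin n) ℝ) (v : ℝ → Fin n → ℝ),
      ContinuousOn v (Set.Icc 0 tm) →
      ContinuousOn (fun t => M *ᵥ v t) (Set.Icc 0 tm) := by
    intro M v hv
    apply continuousOn_pi.2
    intro i
    simp only [Matrix.mulVec, dotProduct]
    apply continuousOn_finset_sum
    intro j _
    exact continuousOn_const.mul ((continuous_apply j).comp_continuousOn hv)
  have hgdC : ContinuousOn gd (Set.Icc 0 tm) :=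
    (hdotC _ _ hlamc.continuousOn (hmulC A w hwC)).add
      (hdotC _ _ hlamC (hmulC A w' hwc.continuousOn))
  have hgdI : IntervalIntegrable gd MeasureTheory.volume 0 tm :=
    (hgdC.mono (by rw [hIcc])).intervalIntegrable
  have hrhsC : ContinuousOn (fun t => lam t ⬝ᵥ (Ap *ᵥ φ' t + Bp *ᵥ φ t)) (Set.Icc 0 tm) :=
    hdotC _ _ hlamC ((hmulC Ap φ' hφc.continuousOn).add (hmulC Bp φ hφC))
  have hrhsI : IntervalIntegrable (fun t => lam t ⬝ᵥ (Ap *ᵥ φ' t + Bp *ᵥ φ t))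
      MeasureTheory.volume 0 tm :=
    (hrhsC.mono (by rw [hIcc])).intervalIntegrable
  have hftc : ∫ t in (0:ℝ)..tm, gd t = 0 := by
    rw [intervalIntegral.integral_eq_sub_of_hasDerivAt hg hgdI]
    simp [hlamT, hw0]
  -- integrand identity on Icc
  have hint : ∀ t ∈ Set.uIcc (0:ℝ) tm,
      Uφ t ⬝ᵥ w t = gd t + lam t ⬝ᵥ (Ap *ᵥ φ' t + Bp *ᵥ φ t) := by
    intro t ht
    rw [hIcc] at ht
    have h3 : Ap *ᵥ φ' t + Bp *ᵥ φ t = -(A *ᵥ w' t + B *ᵥ w t) := by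
      rw [hsens t ht]; abel
    rw [← hadj t ht, h3, hgd]
    simp only [sub_dotProduct, dotProduct_neg, dotProduct_add,
      Matrix.mulVec_transpose, ← Matrix.dotProduct_mulVec]
    ring
  calc ∫ t in (0:ℝ)..tm, Uφ t ⬝ᵥ w t
      = ∫ t in (0:ℝ)..tm, (gd t + lam t ⬝ᵥ (Ap *ᵥ φ' t + Bp *ᵥ φ t)) :=
        intervalIntegral.integral_congr hint
    _ = (∫ t in (0:ℝ)..tm, gd t) + ∫ t in (0:ℝ)..tm, lam t ⬝ᵥ (Ap *ᵥ φ' t + Bp *ᵥ φ t) :=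
        intervalIntegral.integral_add hgdI hrhsI
    _ = ∫ t in (0:ℝ)..tm, lam t ⬝ᵥ (Ap *ᵥ φ' t + Bp *ᵥ φ t) := by rw [hftc, zero_add]
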